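/- arXiv:2402.11219 — 3 statements merged into one kernel-verified Lean document; each statement's English description precedes it below -/
import Mathlib

section
/- Let a, b, c, d, q be positive reals with c ≥ 0, let n be an integer with n > 1 + 2q (so n-1-q > 0), and define f(w) = [a{q(1-2w)+(n-1)w^2} + 2bc(1-w)^2] / (2[d{q+(n-1-2q)w}+c(1-w)]^2) on [0,1], assuming the denominator is positive on [0,1]. Then f is strictly decreasing on [0, w*) and strictly increasing on (w*, 1], where w* = (adq + 2bcd)/(2adq + 2bcd + ac); hence f attains its unique minimum on [0,1] at w*. -/
/-- The upper bound function `f(w)` is strictly decreasing on `[0, w*)`, strictly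
increasing on `(w*, 1]`, and attains its unique minimum on `[0,1]` at
`w* = (adq + 2bcd)/(2adq + 2bcd + ac)`. -/
theorem weight_minimizer
    (a b c d q : ℝ) (n : ℤ) (ha : 0 < a) (hb : 0 < b) (hc : 0 ≤ c) (hd : 0 < d)
    (hq : 0 < q) (hn : (n : ℝ) > 1 + 2 * q)
    (f : ℝ → ℝ)
    (hf : ∀ w, f w = (a * (q * (1 - 2*w) + ((n : ℝ) - 1) * w^2) + 2*b*c*(1 - w)^2) /
      (2 * (d * (q + ((n : ℝ) - 1 - 2*q) * w) + c * (1 - w))^2))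
    (hden : ∀ w ∈ Set.Icc (0:ℝ) 1, 0 < d * (q + ((n : ℝ) - 1 - 2*q) * w) + c * (1 - w))
    (wstar : ℝ) (hw : wstar = (a*d*q + 2*b*c*d) / (2*a*d*q + 2*b*c*d + a*c)) :
    StrictAntiOn f (Set.Ico 0 wstar) ∧ StrictMonoOn f (Set.Ioc wstar 1) ∧
      ∀ w ∈ Set.Icc (0:ℝ) 1, w ≠ wstar → f wstar < f w := by
  have hfe : f = fun w => (a * (q * (1 - 2*w) + ((n : ℝ) - 1) * w^2) + 2*b*c*(1 - w)^2) /
      (2 * (d * (q + ((n : ℝ) - 1 - 2*q) * w) + c * (1 - w))^2) := funext hf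
  subst hfe
  have hM : 0 < 2*a*d*q + 2*b*c*d + a*c := by positivity
  have hP : 0 < a*d*q + 2*b*c*d := by positivity
  have hw0 : 0 < wstar := hw ▸ div_pos hP hM
  have hw1 : wstar < 1 := by
    rw [hw, div_lt_one hM]
    nlinarith [mul_pos ha (mul_pos hd hq), mul_nonneg ha.le hc]
  have hn1q : 0 < (n : ℝ) - 1 - q := by linarith
  -- the derivative
  have hderiv : ∀ x ∈ Set.Icc (0:ℝ) 1,
      HasDerivAt (fun w => (a * (q * (1 - 2*w) + ((n : ℝ) - 1) * w^2) + 2*b*c*(1 - w)^2) /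
        (2 * (d * (q + ((n : ℝ) - 1 - 2*q) * w) + c * (1 - w))^2))
      (((2*a*d*q + 2*b*c*d + a*c)*x - (a*d*q + 2*b*c*d))*((n:ℝ)-1-q) /
        (d * (q + ((n : ℝ) - 1 - 2*q) * x) + c * (1 - x))^3) x := by
    intro x hx
    have hDx := hden x hx
    have hDne : d * (q + ((n : ℝ) - 1 - 2*q) * x) + c * (1 - x) ≠ 0 := ne_of_gt hDx
    have hA : HasDerivAt (fun w : ℝ => 1 - 2*w) (-2) x := by
      simpa using ((hasDerivAt_id x).const_mul 2).const_sub 1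
    have hB : HasDerivAt (fun w : ℝ => w^2) (2*x) x := by
      simpa using hasDerivAt_pow 2 x
    have hC : HasDerivAt (fun w : ℝ => 1 - w) (-1) x := by
      simpa using (hasDerivAt_id x).const_sub 1
    have hC2 : HasDerivAt (fun w : ℝ => (1-w)^2) (2*(1-x)*(-1)) x := by
      refine (hC.fun_pow 2).congr_deriv ?_
      push_cast
      norm_num
    have hN : HasDerivAt (fun w : ℝ => a * (q * (1 - 2*w) + ((n : ℝ) - 1) * w^2) + 2*b*c*(1 - w)^2)
        (a * (q * (-2) + ((n : ℝ) - 1) * (2*x)) + 2*b*c*(2*(1-x)*(-1))) x :=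
      (((hA.const_mul q).add (hB.const_mul ((n:ℝ)-1))).const_mul a).add (hC2.const_mul (2*b*c))
    have hI : HasDerivAt (fun w : ℝ => d * (q + ((n : ℝ) - 1 - 2*q) * w) + c * (1 - w))
        (d * ((n:ℝ)-1-2*q) + c * (-1)) x := by
      have h1 : HasDerivAt (fun w : ℝ => q + ((n : ℝ) - 1 - 2*q) * w) ((n:ℝ)-1-2*q) x := by
        simpa using ((hasDerivAt_id x).const_mul ((n:ℝ)-1-2*q)).const_add q
      exact (h1.const_mul d).add (hC.const_mul c)
    have hD2 := (hI.fun_pow 2).const_mul 2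
    have hne2 : 2 * (d * (q + ((n : ℝ) - 1 - 2*q) * x) + c * (1 - x))^2 ≠ 0 :=
      mul_ne_zero two_ne_zero (pow_ne_zero 2 hDne)
    have hdiv := hN.div hD2 hne2
    have heq : ((2*a*d*q + 2*b*c*d + a*c)*x - (a*d*q + 2*b*c*d))*((n:ℝ)-1-q) /
        (d * (q + ((n : ℝ) - 1 - 2*q) * x) + c * (1 - x))^3 =
        ((a * (q * (-2) + ((n : ℝ) - 1) * (2*x)) + 2*b*c*(2*(1-x)*(-1))) *
          (2 * (d * (q + ((n : ℝ) - 1 - 2*q) * x) + c * (1 - x)) ^ 2) -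
        (a * (q * (1 - 2*x) + ((n : ℝ) - 1) * x^2) + 2*b*c*(1 - x)^2) *
          (2 * ((2:ℕ) * (d * (q + ((n : ℝ) - 1 - 2*q) * x) + c * (1 - x)) ^ (2-1) *
            (d * ((n:ℝ)-1-2*q) + c * (-1))))) /
        (2 * (d * (q + ((n : ℝ) - 1 - 2*q) * x) + c * (1 - x)) ^ 2) ^ 2 := by
      norm_num
      field_simp
      ring
    rw [heq]
    exact hdiv
  have hanti : StrictAntiOn (fun w => (a * (q * (1 - 2*w) + ((n : ℝ) - 1) * w^2) + 2*b*c*(1 - w)^2) /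
      (2 * (d * (q + ((n : ℝ) - 1 - 2*q) * w) + c * (1 - w))^2)) (Set.Icc 0 wstar) := by
    apply strictAntiOn_of_deriv_neg (convex_Icc _ _)
    · intro x hx
      exact (hderiv x ⟨hx.1, hx.2.trans hw1.le⟩).continuousAt.continuousWithinAt
    · intro x hx
      rw [interior_Icc] at hx
      have hx01 : x ∈ Set.Icc (0:ℝ) 1 := ⟨hx.1.le, (hx.2.trans hw1).le⟩
      rw [(hderiv x hx01).deriv]
      apply div_neg_of_neg_of_pos
      · apply mul_neg_of_neg_of_pos _ hn1q
        have hlt : x < wstar := hx.2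
        rw [hw] at hlt
        have := (lt_div_iff₀ hM).mp hlt
        nlinarith
      · exact pow_pos (hden x hx01) 3
  have hmono : StrictMonoOn (fun w => (a * (q * (1 - 2*w) + ((n : ℝ) - 1) * w^2) + 2*b*c*(1 - w)^2) /
      (2 * (d * (q + ((n : ℝ) - 1 - 2*q) * w) + c * (1 - w))^2)) (Set.Icc wstar 1) := by
    apply strictMonoOn_of_deriv_pos (convex_Icc _ _)
    · intro x hx
      exact (hderiv x ⟨hw0.le.trans hx.1, hx.2⟩).continuousAt.continuousWithinAt
    · intro x hx
      rw [interior_Icc] at hx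
      have hx01 : x ∈ Set.Icc (0:ℝ) 1 := ⟨(hw0.trans hx.1).le, hx.2.le⟩
      rw [(hderiv x hx01).deriv]
      apply div_pos
      · apply mul_pos _ hn1q
        have hlt : wstar < x := hx.1
        rw [hw] at hlt
        have := (div_lt_iff₀ hM).mp hlt
        nlinarith
      · exact pow_pos (hden x hx01) 3
  refine ⟨hanti.mono Set.Ico_subset_Icc_self, hmono.mono Set.Ioc_subset_Icc_self, ?_⟩
  intro w hw01 hne
  rcases lt_or_gt_of_ne hne with h | h
  · exact hanti ⟨hw01.1, h.le⟩ ⟨hw0.le, le_rfl⟩ h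
  · exact hmono ⟨le_rfl, hw1.le⟩ ⟨h.le, hw01.2⟩ h
end

section
/- Let A and B be p×p real symmetric matrices. Let λ_1(B) > λ_2(B) be the two largest eigenvalues of B, v a unit eigenvector of B for λ_1(B), and u a unit eigenvector of A for its largest eigenvalue. Then min_{θ∈{-1,1}} ‖θu - v‖^2 ≤ 8‖A - B‖_op^2 / (λ_1(B) - λ_2(B))^2. -/
open Matrix
open scoped Matrix Matrix.Norms.L2Operator

section DKAux
open scoped RealInnerProductSpace

variable {n : ℕ}

private lemma dk_inner_eq_dot (x y : EuclideanSpace ℝ (Fin n)) :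
    ⟪x, y⟫ = (x : Fin n → ℝ) ⬝ᵥ (y : Fin n → ℝ) := by
  simp [PiLp.inner_apply, RCLike.inner_apply, dotProduct, mul_comm]

private lemma dk_dot_self_nonneg (x : Fin n → ℝ) : 0 ≤ x ⬝ᵥ x :=
  Finset.sum_nonneg fun _ _ => mul_self_nonneg _

/-- The identification of a plain vector with an element of `EuclideanSpace`. -/
private noncomputable def E2 (x : Fin n → ℝ) : EuclideanSpace ℝ (Fin n) :=
  (WithLp.equiv 2 _).symm x

private lemma dk_dot_eq_inner (x y : Fin n → ℝ) : x ⬝ᵥ y = ⟪E2 x, E2 y⟫ :=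
  (dk_inner_eq_dot _ _).symm

private lemma dk_norm_E2_sq (x : Fin n → ℝ) : ‖E2 x‖ ^ 2 = x ⬝ᵥ x := by
  rw [← real_inner_self_eq_norm_sq, dk_inner_eq_dot]; rfl

private lemma dk_norm_E2 (x : Fin n → ℝ) : ‖E2 x‖ = Real.sqrt (x ⬝ᵥ x) := by
  rw [← dk_norm_E2_sq, Real.sqrt_sq (norm_nonneg _)]

private lemma dk_dot_mulVec_symm {M : Matrix (Fin n) (Fin n) ℝ} (hM : Mᵀ = M)
    (x y : Fin n → ℝ) : x ⬝ᵥ M *ᵥ y = (M *ᵥ x) ⬝ᵥ y := by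
  rw [Matrix.dotProduct_mulVec, ← Matrix.mulVec_transpose, hM]

private lemma dk_abs_dot_mulVec_le (M : Matrix (Fin n) (Fin n) ℝ) (x y : Fin n → ℝ) :
    |x ⬝ᵥ M *ᵥ y| ≤ ‖M‖ * (‖E2 x‖ * ‖E2 y‖) := by
  rw [dk_dot_eq_inner]
  calc |⟪E2 x, E2 (M *ᵥ y)⟫| ≤ ‖E2 x‖ * ‖E2 (M *ᵥ y)‖ := abs_real_inner_le_norm _ _
  _ ≤ ‖E2 x‖ * (‖M‖ * ‖E2 y‖) := by
      refine mul_le_mul_of_nonneg_left ?_ (norm_nonneg _)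
      exact M.l2_opNorm_mulVec (E2 y)
  _ = ‖M‖ * (‖E2 x‖ * ‖E2 y‖) := by ring

private lemma dk_rayleigh_le {A : Matrix (Fin n) (Fin n) ℝ} (hA : A.IsHermitian) (ν : ℝ)
    (hmax : ∀ (c : ℝ) (x : Fin n → ℝ), x ≠ 0 → A.mulVec x = c • x → c ≤ ν)
    (x : Fin n → ℝ) : x ⬝ᵥ A *ᵥ x ≤ ν * (x ⬝ᵥ x) := by
  set b := hA.eigenvectorBasis with hb
  set μ := hA.eigenvalues with hμdef
  have hAt : Aᵀ = A := by
    rw [← Matrix.conjTranspose_eq_transpose_of_trivial]; exact hA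
  have hμν : ∀ i, μ i ≤ ν := by
    intro i
    refine hmax _ (b i) ?_ (hA.mulVec_eigenvectorBasis i)
    intro h0
    have h00 : (b i : EuclideanSpace ℝ (Fin n)) = 0 := by
      ext j; exact congrFun h0 j
    have h1 : ‖b i‖ = 1 := b.orthonormal.1 i
    rw [h00] at h1; simp at h1
  have key : ∀ i, ⟪(b i : EuclideanSpace ℝ (Fin n)), E2 (A *ᵥ x)⟫
      = μ i * ⟪E2 x, (b i : EuclideanSpace ℝ (Fin n))⟫ := by
    intro i
    rw [dk_inner_eq_dot, dk_inner_eq_dot]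
    show (b i : Fin n → ℝ) ⬝ᵥ (A *ᵥ x) = μ i * (x ⬝ᵥ (b i : Fin n → ℝ))
    have h2 : A *ᵥ (b i : Fin n → ℝ) = μ i • (b i : Fin n → ℝ) :=
      hA.mulVec_eigenvectorBasis i
    rw [dk_dot_mulVec_symm hAt, h2]
    simp [dotProduct_comm]
  have expand : x ⬝ᵥ A *ᵥ x = ∑ i, μ i * ⟪E2 x, (b i : EuclideanSpace ℝ (Fin n))⟫ ^ 2 := by
    rw [dk_dot_eq_inner, ← b.sum_inner_mul_inner (E2 x) (E2 (A *ᵥ x))]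
    refine Finset.sum_congr rfl fun i _ => ?_
    rw [key i]; ring
  have parseval : x ⬝ᵥ x = ∑ i, ⟪E2 x, (b i : EuclideanSpace ℝ (Fin n))⟫ ^ 2 := by
    rw [dk_dot_eq_inner, ← b.sum_inner_mul_inner (E2 x) (E2 x)]
    refine Finset.sum_congr rfl fun i _ => ?_
    rw [real_inner_comm (b i) (E2 x)]; ring
  rw [expand, parseval, Finset.mul_sum]
  exact Finset.sum_le_sum fun i _ => mul_le_mul_of_nonneg_right (hμν i) (sq_nonneg _)

private lemma dk_final {gap E s t : ℝ} (hgap : 0 < gap) (hE : 0 ≤ E) (hs : 0 ≤ s)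
    (hs1 : s ≤ 1) (ht2 : t ^ 2 = 1 - s ^ 2) (htnn : 0 ≤ t)
    (hkey : gap * t ^ 2 ≤ 2 * E * t) : (2 - 2 * s) * gap ^ 2 ≤ 8 * E ^ 2 := by
  rcases eq_or_lt_of_le htnn with h0 | hpos
  · have hs_one : s = 1 := by nlinarith [ht2, hs, hs1]
    rw [hs_one]
    nlinarith [sq_nonneg E]
  · have h4 : gap * t ≤ 2 * E := by
      have h5 : (gap * t) * t ≤ (2 * E) * t := by nlinarith [hkey]
      exact le_of_mul_le_mul_right h5 hpos
    have h6 : (gap * t) * (gap * t) ≤ (2 * E) * (2 * E) :=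
      mul_self_le_mul_self (by positivity) h4
    nlinarith [h6, ht2, hs, hs1,
      mul_nonneg (mul_nonneg hs (by linarith : (0:ℝ) ≤ 1 - s)) (sq_nonneg gap)]

end DKAux

/-- Davis–Kahan type bound: if `v` is a unit leading eigenvector of a symmetric matrix `B`
whose top eigengap is `λ₁(B) - λ₂(B) > 0`, and `u` is a unit eigenvector of a symmetric
matrix `A` for its largest eigenvalue, then
`min_{θ = ±1} ‖θu - v‖² ≤ 8‖A - B‖_op² / (λ₁(B) - λ₂(B))²`. -/
theorem davis_kahan_min_sign_bound
    {p : ℕ} (A B Γ : Matrix (Fin (p + 2)) (Fin (p + 2)) ℝ) (lam : Fin (p + 2) → ℝ)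
    (hAh : A.IsHermitian) (hBh : B.IsHermitian)
    (hΓ : Γ * Γᵀ = 1) (hB : B = Γ * diagonal lam * Γᵀ) (hmono : Antitone lam)
    (hgap : lam 1 < lam 0)
    (v : Fin (p + 2) → ℝ) (hv : v ⬝ᵥ v = 1) (hveig : B.mulVec v = lam 0 • v)
    (u : Fin (p + 2) → ℝ) (hu : u ⬝ᵥ u = 1) (ν : ℝ) (hueig : A.mulVec u = ν • u)
    (hmax : ∀ (c : ℝ) (x : Fin (p + 2) → ℝ), x ≠ 0 → A.mulVec x = c • x → c ≤ ν) :
    min ((u - v) ⬝ᵥ (u - v)) ((-u - v) ⬝ᵥ (-u - v)) ≤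
      8 * ‖A - B‖^2 / (lam 0 - lam 1)^2 := by
  have hgappos : (0:ℝ) < lam 0 - lam 1 := sub_pos.mpr hgap
  have hAt : Aᵀ = A := by rw [← Matrix.conjTranspose_eq_transpose_of_trivial]; exact hAh
  have hBt : Bᵀ = B := by rw [← Matrix.conjTranspose_eq_transpose_of_trivial]; exact hBh
  have hΓ' : Γᵀ * Γ = 1 := mul_eq_one_comm.mp hΓ
  have hΓpair : ∀ x y : Fin (p+2) → ℝ, (Γᵀ *ᵥ x) ⬝ᵥ (Γᵀ *ᵥ y) = x ⬝ᵥ y := by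
    intro x y
    rw [Matrix.mulVec_transpose Γ x, ← Matrix.dotProduct_mulVec, Matrix.mulVec_mulVec, hΓ,
      Matrix.one_mulVec]
  set E := ‖A - B‖ with hE
  have hEnn : (0:ℝ) ≤ E := hE ▸ norm_nonneg _
  clear_value E
  -- eigenvector coordinates of v
  set d := Γᵀ *ᵥ v with hd_def
  clear_value d
  have hDd : diagonal lam *ᵥ d = lam 0 • d := by
    have h2 : Γᵀ *ᵥ (B *ᵥ v) = diagonal lam *ᵥ d := by
      rw [hB, Matrix.mulVec_mulVec, hd_def, Matrix.mulVec_mulVec, ← Matrix.mul_assoc,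
        ← Matrix.mul_assoc, hΓ', Matrix.one_mul]
    rw [← h2, hveig, Matrix.mulVec_smul, ← hd_def]
  have hdzero : ∀ i, i ≠ 0 → d i = 0 := by
    intro i hi
    have h1 : lam i * d i = lam 0 * d i := by
      have h3 := congrFun hDd i
      simpa [Matrix.mulVec_diagonal] using h3
    have hile : lam i ≤ lam 1 := by
      refine hmono ?_
      have hvne : i.val ≠ 0 := fun h => hi (Fin.ext h)
      rw [Fin.le_def, Fin.val_one]
      omega
    have hne : lam i - lam 0 ≠ 0 := by intro h; nlinarith
    have h4 : (lam i - lam 0) * d i = 0 := by ring_nf; linarith [h1]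
    rcases mul_eq_zero.mp h4 with h | h
    · exact absurd h hne
    · exact h
  have hdd1 : d ⬝ᵥ d = 1 := by rw [hd_def, hΓpair]; exact hv
  have hd0sq : d 0 * d 0 = 1 := by
    have h5 : d ⬝ᵥ d = d 0 * d 0 := by
      rw [dotProduct]
      rw [Finset.sum_eq_single 0]
      · intro i _ hi; rw [hdzero i hi]; ring
      · simp
    rw [← h5, hdd1]
  have hd0ne : d 0 ≠ 0 := by intro h; rw [h] at hd0sq; norm_num at hd0sq
  -- main one-sided bound
  have key : ∀ u' : Fin (p+2) → ℝ, u' ⬝ᵥ u' = 1 → A *ᵥ u' = ν • u' → 0 ≤ u' ⬝ᵥ v →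
      (u' - v) ⬝ᵥ (u' - v) ≤ 8 * E ^ 2 / (lam 0 - lam 1) ^ 2 := by
    clear hueig hu u
    intro u hu hueig hs
    set s := u ⬝ᵥ v with hsdef
    clear_value s
    have hexp_sub : (u - v) ⬝ᵥ (u - v) = 2 - 2 * s := by
      rw [sub_dotProduct, dotProduct_sub, dotProduct_sub,
        dotProduct_comm v u, hu, hv, ← hsdef]
      ring
    have hexp_sub' : (v - u) ⬝ᵥ (v - u) = 2 - 2 * s := by
      rw [sub_dotProduct, dotProduct_sub, dotProduct_sub,
        dotProduct_comm v u, hu, hv, ← hsdef]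
      ring
    have hexp_add : (v + u) ⬝ᵥ (v + u) = 2 + 2 * s := by
      rw [add_dotProduct, dotProduct_add, dotProduct_add,
        dotProduct_comm v u, hu, hv, ← hsdef]
      ring
    have hs1 : s ≤ 1 := by
      have h := dk_dot_self_nonneg (u - v)
      rw [hexp_sub] at h
      linarith
    have h1s2 : (0:ℝ) ≤ 1 - s ^ 2 := by nlinarith
    -- Rayleigh facts
    have hvAv : v ⬝ᵥ A *ᵥ v ≤ ν := by
      have h6 := dk_rayleigh_le hAh ν hmax v
      rwa [hv, mul_one] at h6
    have huAu : u ⬝ᵥ A *ᵥ u = ν := by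
      rw [hueig, dotProduct_smul, smul_eq_mul, hu, mul_one]
    have hvBv : v ⬝ᵥ B *ᵥ v = lam 0 := by
      rw [hveig, dotProduct_smul, smul_eq_mul, hv, mul_one]
    -- orthogonal complement part
    set w := u - s • v with hw
    clear_value w
    have hvw : v ⬝ᵥ w = 0 := by
      rw [hw, dotProduct_sub, dotProduct_smul, smul_eq_mul, hv,
        dotProduct_comm v u, ← hsdef]
      ring
    have hwv : w ⬝ᵥ v = 0 := by rw [dotProduct_comm]; exact hvw
    have hww : w ⬝ᵥ w = 1 - s ^ 2 := by
      rw [hw, sub_dotProduct, dotProduct_sub, dotProduct_sub,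
        smul_dotProduct, smul_dotProduct, dotProduct_smul,
        dotProduct_smul, smul_eq_mul, smul_eq_mul, smul_eq_mul,
        dotProduct_comm v u, hu, hv, ← hsdef]
      simp only [smul_eq_mul]; ring
    -- coordinates of w
    set c := Γᵀ *ᵥ w with hc_def
    clear_value c
    have hcc : c ⬝ᵥ c = w ⬝ᵥ w := by rw [hc_def, hΓpair]
    have hcd : c ⬝ᵥ d = 0 := by rw [hc_def, hd_def, hΓpair]; exact hwv
    have hc0 : c 0 = 0 := by
      have h7 : c ⬝ᵥ d = c 0 * d 0 := by
        rw [dotProduct]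
        rw [Finset.sum_eq_single 0]
        · intro i _ hi; rw [hdzero i hi]; ring
        · simp
      rw [hcd] at h7
      rcases mul_eq_zero.mp h7.symm with h | h
      · exact h
      · exact absurd h hd0ne
    have hwBw : w ⬝ᵥ B *ᵥ w ≤ lam 1 * (w ⬝ᵥ w) := by
      have h8 : w ⬝ᵥ B *ᵥ w = c ⬝ᵥ (diagonal lam *ᵥ c) := by
        rw [hB, ← Matrix.mulVec_mulVec, ← Matrix.mulVec_mulVec,
          Matrix.dotProduct_mulVec w Γ _, ← Matrix.mulVec_transpose, ← hc_def]
      have h9 : c ⬝ᵥ (diagonal lam *ᵥ c) = ∑ i, lam i * c i * c i := by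
        rw [dotProduct]
        refine Finset.sum_congr rfl fun i _ => ?_
        rw [Matrix.mulVec_diagonal]; ring
      have h10 : lam 1 * (w ⬝ᵥ w) = ∑ i, lam 1 * (c i * c i) := by
        rw [← hcc, dotProduct, Finset.mul_sum]
      rw [h8, h9, h10]
      refine Finset.sum_le_sum fun i _ => ?_
      by_cases hi : i = 0
      · rw [hi, hc0]; ring_nf; exact le_refl 0
      · have : lam i ≤ lam 1 := by
          refine hmono ?_
          have hvne : i.val ≠ 0 := fun h => hi (Fin.ext h)
          rw [Fin.le_def, Fin.val_one]
          omega
        nlinarith [mul_self_nonneg (c i)]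
    -- Rayleigh-trace chain
    have hud : u = s • v + w := by
      ext i; simp [hw, Pi.add_apply, Pi.sub_apply, Pi.smul_apply, smul_eq_mul]
    have hvBw : v ⬝ᵥ B *ᵥ w = 0 := by
      rw [dk_dot_mulVec_symm hBt, hveig, smul_dotProduct, hvw, smul_eq_mul, mul_zero]
    have hwBv : w ⬝ᵥ B *ᵥ v = 0 := by
      rw [hveig, dotProduct_smul, hwv, smul_eq_mul, mul_zero]
    have huBu : u ⬝ᵥ B *ᵥ u ≤ lam 0 * s ^ 2 + lam 1 * (1 - s ^ 2) := by
      have h11 : u ⬝ᵥ B *ᵥ u = s ^ 2 * lam 0 + w ⬝ᵥ B *ᵥ w := by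
        conv_lhs => rw [hud]
        simp only [Matrix.mulVec_add, Matrix.mulVec_smul, hveig, add_dotProduct,
          dotProduct_add, smul_dotProduct, dotProduct_smul, smul_eq_mul,
          hvw, hwv, hv, hvBw]
        ring
      rw [h11]
      rw [hww] at hwBw
      linarith [hwBw]
    have hident : (v - u) ⬝ᵥ ((B - A) *ᵥ (v + u)) =
        (v ⬝ᵥ B *ᵥ v - u ⬝ᵥ B *ᵥ u) + (u ⬝ᵥ A *ᵥ u - v ⬝ᵥ A *ᵥ v) := by
      have e1 : v ⬝ᵥ B *ᵥ u = u ⬝ᵥ B *ᵥ v := by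
        rw [dk_dot_mulVec_symm hBt, dotProduct_comm]
      have e2 : v ⬝ᵥ A *ᵥ u = u ⬝ᵥ A *ᵥ v := by
        rw [dk_dot_mulVec_symm hAt, dotProduct_comm]
      simp only [Matrix.sub_mulVec, Matrix.mulVec_add, dotProduct_sub,
        dotProduct_add, sub_dotProduct]
      rw [e1, e2]; ring
    have hsum : (lam 0 - lam 1) * (1 - s ^ 2) ≤ (v - u) ⬝ᵥ ((B - A) *ᵥ (v + u)) := by
      rw [hident, hvBv, huAu]
      have h14 : lam 0 - (lam 0 * s ^ 2 + lam 1 * (1 - s ^ 2)) = (lam 0 - lam 1) * (1 - s ^ 2) := by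
        ring
      linarith [huBu, hvAv]
    have hnorm : (v - u) ⬝ᵥ ((B - A) *ᵥ (v + u)) ≤ E * (2 * Real.sqrt (1 - s ^ 2)) := by
      have h1 := dk_abs_dot_mulVec_le (B - A) (v - u) (v + u)
      have hEBA : ‖B - A‖ = E := by rw [hE, norm_sub_rev]
      have hnsub : ‖E2 (v - u)‖ = Real.sqrt (2 - 2 * s) := by rw [dk_norm_E2, hexp_sub']
      have hnadd : ‖E2 (v + u)‖ = Real.sqrt (2 + 2 * s) := by rw [dk_norm_E2, hexp_add]
      have hprod : Real.sqrt (2 - 2 * s) * Real.sqrt (2 + 2 * s)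
          = 2 * Real.sqrt (1 - s ^ 2) := by
        rw [← Real.sqrt_mul (by linarith)]
        have h12 : (2 - 2 * s) * (2 + 2 * s) = 4 * (1 - s ^ 2) := by ring
        rw [h12, Real.sqrt_mul (by norm_num)]
        have h13 : Real.sqrt 4 = 2 := by
          rw [show (4:ℝ) = 2 ^ 2 by norm_num, Real.sqrt_sq (by norm_num)]
        rw [h13]
      calc (v - u) ⬝ᵥ ((B - A) *ᵥ (v + u)) ≤ |(v - u) ⬝ᵥ ((B - A) *ᵥ (v + u))| :=
            le_abs_self _
        _ ≤ ‖B - A‖ * (‖E2 (v - u)‖ * ‖E2 (v + u)‖) := h1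
        _ = E * (2 * Real.sqrt (1 - s ^ 2)) := by rw [hEBA, hnsub, hnadd, hprod]
    set t := Real.sqrt (1 - s ^ 2) with ht_def
    have ht2 : t ^ 2 = 1 - s ^ 2 := by rw [ht_def]; exact Real.sq_sqrt h1s2
    have htnn : (0:ℝ) ≤ t := by rw [ht_def]; exact Real.sqrt_nonneg _
    clear_value t
    have hkey : (lam 0 - lam 1) * t ^ 2 ≤ 2 * E * t := by
      rw [ht2]; linarith [hsum, hnorm]
    rw [hexp_sub, le_div_iff₀ (by positivity : (0:ℝ) < (lam 0 - lam 1) ^ 2)]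
    exact dk_final hgappos hEnn hs hs1 ht2 htnn hkey
  rcases le_total 0 (u ⬝ᵥ v) with hsp | hsn
  · exact le_trans (min_le_left _ _) (key u hu hueig hsp)
  · have h2 := key (-u) (by rw [neg_dotProduct, dotProduct_neg, neg_neg]; exact hu)
      (by rw [Matrix.mulVec_neg, hueig, smul_neg])
      (by rw [neg_dotProduct]; linarith)
    exact le_trans (min_le_right _ _) h2
end

section
/- Suppose a_n = Θ(1), b_n = Θ(1), c_n = 0, d_n = Θ(n^{-η}) with η > 0, q fixed. Then for fixed w ∈ (0,1], R_n(w) = 8a_n{q(1-2w)+(n-1)w^2} / (d_n{q+(n-1-2q)w})^2 = Θ(n^{2η-1}), and for w = 0, R_n(0) = 8a_n q/(d_n^2 q^2) = Θ(n^{2η}). -/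
open Asymptotics Filter

private lemma nat_cast_theta : (fun n : ℕ => (n : ℝ)) =Θ[atTop] fun n : ℕ => (n : ℝ) ^ (1 : ℝ) := by
  apply Filter.EventuallyEq.isTheta
  filter_upwards [eventually_ge_atTop 1] with n hn
  rw [Real.rpow_one]

private lemma lin_theta (k m : ℝ) (hk : k ≠ 0) :
    (fun n : ℕ => k * (n : ℝ) + m) =Θ[atTop] fun n : ℕ => (n : ℝ) := by
  have h1 : (fun n : ℕ => k * (n : ℝ)) =Θ[atTop] fun n : ℕ => (n : ℝ) :=
    (isTheta_rfl).const_mul_left hk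
  have h2 : (fun _ : ℕ => m) =o[atTop] fun n : ℕ => (n : ℝ) := by
    refine isLittleO_const_left.2 (Or.inr ?_)
    have : Tendsto (fun n : ℕ => (n:ℝ)) atTop atTop := tendsto_natCast_atTop_atTop
    exact tendsto_norm_atTop_atTop.comp this
  exact h1.add_isLittleO h2

private lemma rpow_pos_theta (η : ℝ) : ∀ᶠ n : ℕ in atTop, (n : ℝ) ^ η ≠ 0 := by
  filter_upwards [eventually_ge_atTop 1] with n hn
  have : (0:ℝ) < (n:ℝ) := by exact_mod_cast Nat.lt_of_lt_of_le Nat.zero_lt_one hn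
  positivity

/-- Asymptotic orders of the MSE upper bound under a weak identifiability regime without
regression signal (`α = 0`, so `c_n = 0`): if `a_n, b_n = Θ(1)`, `d_n = Θ(n^{-η})` with
`η > 0`, then `R_n(w) = Θ(n^{2η-1})` for fixed `w ∈ (0,1]`, while `R_n(0) = Θ(n^{2η})`. -/
theorem rate_weak_identifiability_no_signal
    (a b c d : ℕ → ℝ) (q η : ℝ) (hq : 0 < q) (hη : 0 < η)
    (ha : a =Θ[atTop] fun _ => (1 : ℝ)) (hb : b =Θ[atTop] fun _ => (1 : ℝ))
    (hc : ∀ n, c n = 0) (hd : d =Θ[atTop] fun n => (n : ℝ) ^ (-η))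
    (R : ℝ → ℕ → ℝ)
    (hR : ∀ w n, R w n =
      (8 * a n * (q * (1 - 2*w) + ((n : ℝ) - 1) * w^2) + 16 * b n * c n * (1 - w)^2) /
        (d n * (q + ((n : ℝ) - 1 - 2*q) * w) + c n * (1 - w))^2) :
    (∀ w ∈ Set.Ioc (0:ℝ) 1, (R w) =Θ[atTop] fun n => (n : ℝ) ^ (2*η - 1)) ∧
    ((R 0) =Θ[atTop] fun n => (n : ℝ) ^ (2*η)) := by
  have h8a : (fun n => 8 * a n) =Θ[atTop] (fun _ : ℕ => (1:ℝ)) := ha.const_mul_left (by norm_num)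
  constructor
  · intro w hw
    obtain ⟨hw0, hw1⟩ := hw
    -- rewrite R w
    have hRw : R w = fun n =>
        (8 * a n) * (w^2 * (n:ℝ) + (q * (1 - 2*w) - w^2)) /
          (d n * (w * (n:ℝ) + (q - (1 + 2*q) * w)))^2 := by
      funext n
      rw [hR w n, hc n]
      ring_nf
    rw [hRw]
    have hnum : (fun n : ℕ => (8 * a n) * (w^2 * (n:ℝ) + (q * (1 - 2*w) - w^2)))
        =Θ[atTop] fun n : ℕ => (n:ℝ) ^ (1:ℝ) := by
      have := h8a.mul ((lin_theta (w^2) (q * (1 - 2*w) - w^2) (by positivity)).trans nat_cast_theta)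
      simpa using this
    have hlin : (fun n : ℕ => w * (n:ℝ) + (q - (1 + 2*q) * w)) =Θ[atTop] fun n : ℕ => (n:ℝ) :=
      lin_theta w _ (ne_of_gt hw0)
    have hden : (fun n : ℕ => (d n * (w * (n:ℝ) + (q - (1 + 2*q) * w)))^2)
        =Θ[atTop] fun n : ℕ => (((n:ℝ) ^ (-η)) * ((n:ℝ) ^ (1:ℝ)))^2 :=
      (hd.mul (hlin.trans nat_cast_theta)).pow 2
    have := hnum.div hden
    refine this.trans (Filter.EventuallyEq.isTheta ?_)
    filter_upwards [eventually_ge_atTop 1] with n hn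
    have hn0 : (0:ℝ) < (n:ℝ) := by exact_mod_cast Nat.lt_of_lt_of_le Nat.zero_lt_one hn
    rw [← Real.rpow_add hn0, ← Real.rpow_natCast (((n:ℝ)) ^ (-η + 1)) 2,
      ← Real.rpow_mul hn0.le, ← Real.rpow_sub hn0]
    norm_num
    ring_nf
  · have hR0 : R 0 = fun n => (8 * a n * q) / (d n * q)^2 := by
      funext n
      rw [hR 0 n, hc n]
      ring_nf
    rw [hR0]
    have hnum : (fun n : ℕ => 8 * a n * q) =Θ[atTop] (fun _ : ℕ => (1:ℝ)) := by
      have := h8a.mul (isTheta_rfl (f := fun _ : ℕ => q))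
      have hq' : (fun _ : ℕ => q) =Θ[atTop] (fun _ : ℕ => (1:ℝ)) :=
        isTheta_const_const (ne_of_gt hq) one_ne_zero
      simpa using h8a.mul hq'
    have hden : (fun n : ℕ => (d n * q)^2) =Θ[atTop] fun n : ℕ => (((n:ℝ) ^ (-η)) * 1)^2 :=
      (hd.mul (isTheta_const_const (ne_of_gt hq) one_ne_zero)).pow 2
    have := hnum.div hden
    refine this.trans (Filter.EventuallyEq.isTheta ?_)
    filter_upwards [eventually_ge_atTop 1] with n hn
    have hn0 : (0:ℝ) < (n:ℝ) := by exact_mod_cast Nat.lt_of_lt_of_le Nat.zero_lt_one hn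
    rw [mul_one, ← Real.rpow_natCast (((n:ℝ)) ^ (-η)) 2, ← Real.rpow_mul hn0.le]
    rw [one_div, ← Real.rpow_neg hn0.le]
    norm_num
    ring_nf
end
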